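/- If G is an FS-regular abelian group, then the direct sum G ⊕ ℤ is also FS-regular. -/

import Mathlib

set_option linter.unusedSectionVars false
set_option maxHeartbeats 1000000

/-- The subset sums multiset: the multiset of sums of all sub-multisets of `A`. -/
def FS {G : Type*} [AddCommGroup G] (A : Multiset G) : Multiset G :=
  A.powerset.map Multiset.sum

/-- `A ∼₀ A'`: `A'` is obtained from `A` by flipping the signs of a zero-sum sub-multiset. -/
def Sim0 {G : Type*} [AddCommGroup G] [DecidableEq G] (A A' : Multiset G) : Prop :=
  ∃ B ≤ A, B.sum = 0 ∧ A' = (A - B) + B.map (fun x => -x)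

/-- A group `G` is `FS`-regular if `FS A = FS A'` exactly when `A ∼₀ A'`. -/
def FSRegular (G : Type*) [AddCommGroup G] [DecidableEq G] : Prop :=
  ∀ A A' : Multiset G, FS A = FS A' ↔ Sim0 A A'

open Multiset AddMonoidAlgebra

section Basics
variable {K : Type*} [AddCommGroup K] [DecidableEq K]

lemma FS_zero : FS (0 : Multiset K) = {0} := rfl

lemma FS_cons (a : K) (A : Multiset K) :
    FS (a ::ₘ A) = FS A + (FS A).map (fun s => a + s) := by
  simp only [FS, powerset_cons, Multiset.map_add, Multiset.map_map]
  congr 1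
  simp [Function.comp_def, Multiset.sum_cons]

lemma card_FS (A : Multiset K) : (FS A).card = 2 ^ A.card := by
  simp [FS]

lemma mem_FS_iff {A : Multiset K} {s : K} : s ∈ FS A ↔ ∃ B ≤ A, B.sum = s := by
  simp [FS, Multiset.mem_map, Multiset.mem_powerset]

lemma zero_mem_FS (A : Multiset K) : (0 : K) ∈ FS A :=
  mem_FS_iff.2 ⟨0, Multiset.zero_le _, rfl⟩

lemma mem_FS_of_mem {A : Multiset K} {a : K} (ha : a ∈ A) : a ∈ FS A :=
  mem_FS_iff.2 ⟨{a}, (Multiset.singleton_le).2 ha, by simp⟩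

lemma msum_neg (E : Multiset K) : (E.map (fun x : K => -x)).sum = -E.sum := by
  induction E using Multiset.induction with
  | empty => simp
  | cons a s ih => simp only [Multiset.map_cons, Multiset.sum_cons, ih, neg_add]

/-- Splitting a submultiset of a sum. -/
lemma split_le_add {B C D : Multiset K} (h : B ≤ C + D) :
    ∃ B₁ B₂, B₁ ≤ C ∧ B₂ ≤ D ∧ B = B₁ + B₂ := by
  refine ⟨B - D, B - (B - D), ?_, ?_, ?_⟩
  · rw [Multiset.le_iff_count]
    intro a
    have := Multiset.le_iff_count.1 h a
    simp only [Multiset.count_sub, Multiset.count_add] at *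
    omega
  · rw [Multiset.le_iff_count]
    intro a
    simp only [Multiset.count_sub]
    omega
  · apply Multiset.ext.2
    intro a
    have := Multiset.le_iff_count.1 h a
    simp only [Multiset.count_sub, Multiset.count_add] at *
    omega

lemma map_neg_map_neg (B : Multiset K) : (B.map (fun x : K => -x)).map (fun x : K => -x) = B := by
  simp [Multiset.map_map, Function.comp_def]

/-- Composition of two sign-flips is a sign-flip, with sums adding. -/
lemma comp_flip {A A'' A' B₀ B₁ : Multiset K} (h₀ : B₀ ≤ A)
    (e0 : A'' = (A - B₀) + B₀.map (fun x => -x)) (h₁ : B₁ ≤ A'')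
    (e1 : A' = (A'' - B₁) + B₁.map (fun x => -x)) :
    ∃ B ≤ A, B.sum = B₀.sum + B₁.sum ∧ A' = (A - B) + B.map (fun x => -x) := by
  subst e0
  obtain ⟨B₁c, E, hc, hE, rfl⟩ := split_le_add h₁
  have hnegE : E.map (fun x : K => -x) ≤ B₀ := by
    have := Multiset.map_le_map (f := fun x : K => -x) hE
    rwa [map_neg_map_neg] at this
  refine ⟨(B₀ - E.map (fun x => -x)) + B₁c, ?_, ?_, ?_⟩
  · calc (B₀ - E.map (fun x => -x)) + B₁c ≤ B₀ + (A - B₀) := by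
          exact add_le_add (tsub_le_self) hc
      _ = A := by rw [add_comm, tsub_add_cancel_of_le h₀]
  · have hsub : (B₀ - E.map (fun x => -x)).sum + (E.map (fun x => -x)).sum = B₀.sum := by
      rw [← Multiset.sum_add, tsub_add_cancel_of_le hnegE]
    rw [msum_neg, ← sub_eq_add_neg] at hsub
    have h3 : (B₀ - E.map (fun x => -x)).sum = B₀.sum + E.sum := sub_eq_iff_eq_add.1 hsub
    simp only [Multiset.sum_add, h3]
    abel
  · have key1 : (A - B₀ + B₀.map (fun x => -x)) - (B₁c + E)
        = ((A - B₀) - B₁c) + (B₀.map (fun x => -x) - E) := by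
      apply Multiset.ext.2
      intro a
      have h1 := Multiset.le_iff_count.1 hc a
      have h2 := Multiset.le_iff_count.1 hE a
      simp only [Multiset.count_sub, Multiset.count_add] at *
      omega
    have key2 : B₀.map (fun x : K => -x) - E = (B₀ - E.map (fun x => -x)).map (fun x => -x) := by
      have : B₀.map (fun x : K => -x) = (B₀ - E.map (fun x => -x)).map (fun x => -x) + E := by
        conv_lhs => rw [← tsub_add_cancel_of_le hnegE]
        rw [Multiset.map_add, map_neg_map_neg]
      rw [this, add_tsub_cancel_right]
    have key3 : A - ((B₀ - E.map (fun x => -x)) + B₁c)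
        = ((A - B₀) - B₁c) + E.map (fun x => -x) := by
      apply Multiset.ext.2
      intro a
      have h0 := Multiset.le_iff_count.1 h₀ a
      have h1 := Multiset.le_iff_count.1 hc a
      have h2 := Multiset.le_iff_count.1 hnegE a
      simp only [Multiset.count_sub, Multiset.count_add] at *
      omega
    rw [e1, key1, key2, key3]
    apply Multiset.ext.2
    intro a
    simp only [Multiset.map_add, Multiset.count_add]
    omega

/-- Flips are involutive. -/
lemma flip_invol {A A' B : Multiset K} (hB : B ≤ A)
    (e : A' = (A - B) + B.map (fun x => -x)) :
    B.map (fun x => -x) ≤ A' ∧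
      A = (A' - B.map (fun x => -x)) + (B.map (fun x => -x)).map (fun x => -x) := by
  constructor
  · rw [e]; exact Multiset.le_add_left _ _
  · rw [e, add_tsub_cancel_right, map_neg_map_neg, tsub_add_cancel_of_le hB]

lemma translate_cancel (t : K) (M : Multiset K) :
    (M.map (fun s => -t + s)).map (fun s => t + s) = M := by
  rw [Multiset.map_map]
  have : ((fun s => t + s) ∘ fun s : K => -t + s) = id := by
    funext s; show t + (-t + s) = s; abel
  rw [this, Multiset.map_id]

end Basics

section Alg
variable {K : Type*} [AddCommGroup K] [DecidableEq K]

noncomputable def psi (M : Multiset K) : AddMonoidAlgebra ℤ K :=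
  (M.map (fun s => AddMonoidAlgebra.single s (1 : ℤ))).sum

noncomputable def phi (M : Multiset K) : AddMonoidAlgebra ℤ K :=
  (M.map (fun a => (1 : AddMonoidAlgebra ℤ K) + AddMonoidAlgebra.single a 1)).prod

lemma psi_cons (a : K) (M : Multiset K) :
    psi (a ::ₘ M) = AddMonoidAlgebra.single a 1 + psi M := by simp [psi]

lemma psi_add (M N : Multiset K) : psi (M + N) = psi M + psi N := by simp [psi]

lemma psi_apply (M : Multiset K) (k : K) : (psi M).coeff k = (M.count k : ℤ) := by
  induction M using Multiset.induction with
  | empty => simp [psi]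
  | cons a s ih =>
      rw [psi_cons, AddMonoidAlgebra.coeff_add, Finsupp.add_apply, ih, Multiset.count_cons]
      by_cases h : k = a
      · subst h; simp [AddMonoidAlgebra.coeff_single, Finsupp.single_apply]; ring
      · simp [AddMonoidAlgebra.coeff_single, Finsupp.single_apply, Ne.symm h, h]

lemma psi_injective : Function.Injective (psi : Multiset K → AddMonoidAlgebra ℤ K) := by
  intro M N h
  apply Multiset.ext.2
  intro a
  have := congrArg (fun f : AddMonoidAlgebra ℤ K => f.coeff a) h
  simp only [psi_apply] at this
  exact_mod_cast this

lemma psi_translate (t : K) (M : Multiset K) :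
    psi (M.map (fun s => t + s)) = AddMonoidAlgebra.single t 1 * psi M := by
  induction M using Multiset.induction with
  | empty => simp [psi]
  | cons a s ih =>
      rw [Multiset.map_cons, psi_cons, psi_cons, mul_add, ih,
        AddMonoidAlgebra.single_mul_single, mul_one]

lemma phi_zero : phi (0 : Multiset K) = 1 := rfl

lemma phi_cons (a : K) (M : Multiset K) :
    phi (a ::ₘ M) = (1 + AddMonoidAlgebra.single a 1) * phi M := by simp [phi]

lemma phi_add (M N : Multiset K) : phi (M + N) = phi M * phi N := by simp [phi]

lemma phi_eq_psi_FS (A : Multiset K) : phi A = psi (FS A) := by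
  induction A using Multiset.induction with
  | empty =>
      rw [phi_zero, FS_zero]
      show (1 : AddMonoidAlgebra ℤ K) = psi {0}
      simp [psi, AddMonoidAlgebra.one_def]
  | cons a s ih =>
      rw [phi_cons, FS_cons, psi_add, add_mul, one_mul, ih, psi_translate]

lemma FS_eq_iff_phi {A A' : Multiset K} : FS A = FS A' ↔ phi A = phi A' := by
  rw [phi_eq_psi_FS, phi_eq_psi_FS]
  exact ⟨fun h => by rw [h], fun h => psi_injective h⟩

lemma phi_mapneg (B : Multiset K) :
    phi (B.map (fun x => -x)) = AddMonoidAlgebra.single (-B.sum) 1 * phi B := by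
  induction B using Multiset.induction with
  | empty =>
      rw [Multiset.map_zero, phi_zero, Multiset.sum_zero, neg_zero, mul_one,
        ← AddMonoidAlgebra.one_def]
  | cons a s ih =>
      rw [Multiset.map_cons, phi_cons, phi_cons, ih, ← mul_assoc]
      have key : ((1 : AddMonoidAlgebra ℤ K) + AddMonoidAlgebra.single (-a) 1) *
          AddMonoidAlgebra.single (-s.sum) 1
          = AddMonoidAlgebra.single (-(a ::ₘ s).sum) 1 *
            (1 + AddMonoidAlgebra.single a 1) := by
        rw [add_mul, mul_add, one_mul, mul_one, AddMonoidAlgebra.single_mul_single,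
          AddMonoidAlgebra.single_mul_single, one_mul, Multiset.sum_cons]
        rw [show -a + -s.sum = -(a + s.sum) by abel, show -(a + s.sum) + a = -s.sum by abel]
        exact add_comm _ _
      rw [key, mul_assoc]

/-- The flip lemma : flipping `B ≤ A` translates `FS` by `-B.sum`. -/
lemma FS_flip {A B : Multiset K} (hB : B ≤ A) :
    FS ((A - B) + B.map (fun x => -x)) = (FS A).map (fun s => -B.sum + s) := by
  apply psi_injective
  rw [← phi_eq_psi_FS, psi_translate, ← phi_eq_psi_FS, phi_add, phi_mapneg, mul_comm (phi (A-B)),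
    mul_assoc, ← phi_add, show B + (A - B) = A from by rw [add_comm, tsub_add_cancel_of_le hB]]

lemma single_neg' (x : K) (c : ℤ) :
    AddMonoidAlgebra.single x (-c) = - AddMonoidAlgebra.single x c := by
  have h : AddMonoidAlgebra.single x (-c) + AddMonoidAlgebra.single x c = 0 := by
    rw [← AddMonoidAlgebra.single_add]; simp
  linear_combination h

lemma two_eq_single (K : Type*) [AddCommGroup K] [DecidableEq K] :
    (2 : AddMonoidAlgebra ℤ K) = AddMonoidAlgebra.single 0 2 := by
  rw [show (2:ℤ) = 1 + 1 from by norm_num, AddMonoidAlgebra.single_add,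
    ← AddMonoidAlgebra.one_def]
  norm_num

/-- Telescoping sum. -/
lemma tele (a : K) (m : ℕ) :
    ((1 : AddMonoidAlgebra ℤ K) + AddMonoidAlgebra.single a 1) *
      (Finset.range m).sum (fun i => AddMonoidAlgebra.single (i • a) ((-1)^i : ℤ))
    = 1 - AddMonoidAlgebra.single (m • a) ((-1)^m : ℤ) := by
  induction m with
  | zero => simp [AddMonoidAlgebra.one_def]
  | succ m ih =>
      rw [Finset.sum_range_succ, mul_add, ih, add_mul, one_mul,
        AddMonoidAlgebra.single_mul_single, one_mul]
      rw [show a + m • a = (m+1) • a by rw [succ_nsmul]; abel]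
      rw [pow_succ]
      rw [show ((-1:ℤ)^m * -1) = -((-1:ℤ)^m) from by ring, single_neg']
      abel

/-- In a group with no 2-torsion, `1 + X^a` is a non-zero-divisor. -/
lemma reg_one_add (h2 : ∀ x : K, x + x = 0 → x = 0) (a : K)
    (f : AddMonoidAlgebra ℤ K)
    (hf : ((1 : AddMonoidAlgebra ℤ K) + AddMonoidAlgebra.single a 1) * f = 0) : f = 0 := by
  by_cases hfin : IsOfFinAddOrder a
  · set n := addOrderOf a with hn
    have hnpos : 0 < n := hfin.addOrderOf_pos
    have hna : n • a = 0 := addOrderOf_nsmul_eq_zero a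
    have hodd : ¬ (2 ∣ n) := by
      rintro ⟨m, hm⟩
      have hmpos : 0 < m := by omega
      have hb : m • a + m • a = 0 := by
        rw [← add_nsmul, show m + m = n by omega, hna]
      have hma : m • a = 0 := h2 _ hb
      have hdvd : n ∣ m := by rw [hn]; exact (addOrderOf_dvd_iff_nsmul_eq_zero).2 hma
      have := Nat.le_of_dvd hmpos hdvd
      omega
    have hneg : ((-1 : ℤ))^n = -1 := Odd.neg_one_pow (Nat.odd_iff.2 (by omega))
    have h2f : (2 : AddMonoidAlgebra ℤ K) * f = 0 := by
      have := congrArg (fun g => ((Finset.range n).sum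
        (fun i => AddMonoidAlgebra.single (i • a) ((-1)^i : ℤ))) * g) hf
      simp only [mul_zero] at this
      rw [← mul_assoc, mul_comm _ (1 + AddMonoidAlgebra.single a 1), tele, hna, hneg] at this
      rw [show (AddMonoidAlgebra.single (0:K) (-1:ℤ)) = -1 from by
        rw [show (-1:ℤ) = -(1:ℤ) from rfl, single_neg', ← AddMonoidAlgebra.one_def]] at this
      rw [sub_neg_eq_add] at this
      rw [show (2 : AddMonoidAlgebra ℤ K) = 1 + 1 from by norm_num]
      exact this
    ext k
    rw [two_eq_single] at h2f
    have := congrArg (fun g : AddMonoidAlgebra ℤ K => g.coeff k) h2f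
    simp only [AddMonoidAlgebra.coeff_single_zero_mul, AddMonoidAlgebra.coeff_zero, Finsupp.coe_zero, Pi.zero_apply] at this
    simpa using by omega
  · -- infinite order
    have hstep : ∀ y : K, f.coeff (-a + y) = - f.coeff y := by
      intro y
      have : f + AddMonoidAlgebra.single a 1 * f = 0 := by
        rw [← one_mul f, ← mul_assoc, mul_one, ← add_mul]; exact hf
      have h4 := congrArg (fun g : AddMonoidAlgebra ℤ K => g.coeff y) this
      rw [AddMonoidAlgebra.coeff_add, Finsupp.add_apply] at h4
      rw [AddMonoidAlgebra.coeff_single_mul_apply, one_mul] at h4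
      simp only [AddMonoidAlgebra.coeff_zero, Finsupp.coe_zero, Pi.zero_apply] at h4
      linarith
    have hiter : ∀ (n : ℕ) (y : K), f.coeff (-(n • a) + y) = (-1)^n * f.coeff y := by
      intro n
      induction n with
      | zero => intro y; simp
      | succ n ih =>
          intro y
          have : -((n+1) • a) + y = -a + (-(n • a) + y) := by
            rw [succ_nsmul]; abel
          rw [this, hstep, ih, pow_succ]
          ring
    by_contra hf0
    have hex : ∃ y, f.coeff y ≠ 0 := by
      by_contra hall
      push_neg at hall
      exact hf0 (AddMonoidAlgebra.coeff_injective (Finsupp.ext hall))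
    obtain ⟨y₀, hy₀⟩ := hex
    have hmem : ∀ n : ℕ, (-(n • a) + y₀) ∈ f.coeff.support := by
      intro n
      rw [Finsupp.mem_support_iff, hiter]
      intro hcontra
      apply hy₀
      have : ((-1:ℤ))^n ≠ 0 := by positivity
      exact by
        rcases mul_eq_zero.1 hcontra with h | h
        · exact absurd h this
        · exact h
    have hsmul : ∀ n m : ℕ, n < m → ¬ (n • a = m • a) := by
      intro n m hlt heq
      have hm : m = (m - n) + n := by omega
      rw [hm, add_nsmul] at heq
      have heq2 : (m - n) • a + n • a = 0 + n • a := by rw [zero_add]; exact heq.symm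
      have hz : (m - n) • a = 0 := add_right_cancel heq2
      exact hfin (isOfFinAddOrder_iff_nsmul_eq_zero.2 ⟨m - n, by omega, hz⟩)
    have hinj : Function.Injective (fun n : ℕ => -(n • a) + y₀) := by
      intro n m hnm
      simp only at hnm
      have heq : n • a = m • a := by
        have h1 := congrArg (fun z => -(z - y₀)) hnm
        rw [show -(-(n • a) + y₀ - y₀) = n • a from by abel,
          show -(-(m • a) + y₀ - y₀) = m • a from by abel] at h1
        exact h1
      by_contra hne
      rcases Nat.lt_or_ge n m with hlt | hge
      · exact hsmul n m hlt heq
      · exact hsmul m n (by omega) heq.symm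
    have : (↑f.coeff.support : Set K).Infinite :=
      Set.infinite_of_injective_forall_mem hinj hmem
    exact this (f.coeff.support.finite_toSet)

end Alg

section Alg2
variable {K : Type*} [AddCommGroup K] [DecidableEq K]

lemma phi_reg (h2 : ∀ x : K, x + x = 0 → x = 0) (Z : Multiset K) :
    ∀ f : AddMonoidAlgebra ℤ K, phi Z * f = 0 → f = 0 := by
  induction Z using Multiset.induction with
  | empty => intro f hf; rwa [phi_zero, one_mul] at hf
  | cons a s ih =>
      intro f hf
      rw [phi_cons, mul_assoc] at hf
      exact ih _ (reg_one_add h2 a _ hf)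

lemma phi_cancel (h2 : ∀ x : K, x + x = 0 → x = 0) (Z : Multiset K)
    {f g : AddMonoidAlgebra ℤ K} (h : phi Z * f = phi Z * g) : f = g := by
  have : phi Z * (f - g) = 0 := by rw [mul_sub, h, sub_self]
  exact sub_eq_zero.1 (phi_reg h2 Z _ this)
  
lemma no_two_torsion_of_FSRegular (h : FSRegular K) (g : K) (hg : g + g = 0) : g = 0 := by
  by_contra hg0
  set A : Multiset K := g ::ₘ g ::ₘ {g} with hA
  set A' : Multiset K := g ::ₘ (0 : K) ::ₘ {(0 : K)} with hA'
  have hFS : FS A = FS A' := by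
    rw [FS_eq_iff_phi]
    have hx : AddMonoidAlgebra.single g (1:ℤ) * AddMonoidAlgebra.single g 1 = 1 := by
      rw [AddMonoidAlgebra.single_mul_single, one_mul, hg, ← AddMonoidAlgebra.one_def]
    have h0 : AddMonoidAlgebra.single (0:K) (1:ℤ) = 1 := (AddMonoidAlgebra.one_def).symm
    rw [hA, hA', show ({g} : Multiset K) = g ::ₘ 0 from rfl,
      show ({(0:K)} : Multiset K) = (0:K) ::ₘ 0 from rfl]
    rw [phi_cons, phi_cons, phi_cons, phi_cons, phi_cons, phi_cons, phi_zero, h0]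
    set x := AddMonoidAlgebra.single g (1:ℤ)
    ring_nf
    linear_combination (3 + x) * hx
  obtain ⟨B, hB, hBsum, heq⟩ := (h A A').1 hFS
  have hmem : ∀ b ∈ B, b = g := by
    intro b hb
    have := Multiset.mem_of_le hB hb
    simp [hA] at this
    tauto
  have hmapneg : B.map (fun x => -x) = B := by
    rw [show B.map (fun x => -x) = B.map id from Multiset.map_congr rfl
      (fun b hb => by rw [hmem b hb]; show -g = id g; rw [neg_eq_of_add_eq_zero_left hg]; rfl)]
    exact Multiset.map_id B
  rw [hmapneg, tsub_add_cancel_of_le hB] at heq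
  have := congrArg (Multiset.count 0) heq
  have hgz : (0 : K) ≠ g := Ne.symm hg0
  simp [hA, hA', Multiset.count_cons, hgz] at this

end Alg2

section Gen
variable {K : Type*} [AddCommGroup K] [DecidableEq K]

/-- From `FS`-regularity: translated `FS`-equality gives a flip with prescribed sum. -/
lemma gen_flip_of_translate (hreg : FSRegular K) {A A' : Multiset K} {c : K}
    (hFS : FS A' = (FS A).map (fun s => -c + s)) :
    ∃ B ≤ A, B.sum = c ∧ A' = (A - B) + B.map (fun x => -x) := by
  have h0 : (0 : K) ∈ FS A' := zero_mem_FS A'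
  rw [hFS] at h0
  obtain ⟨s, hs, hs0⟩ := Multiset.mem_map.1 h0
  have hsc : s = c := by
    have : c = s := neg_add_eq_zero.1 hs0
    exact this.symm
  obtain ⟨B₀, hB₀, hB₀sum⟩ := mem_FS_iff.1 hs
  have hFS'' : FS ((A - B₀) + B₀.map (fun x => -x)) = FS A' := by
    rw [FS_flip hB₀, hB₀sum, hsc, hFS]
  obtain ⟨B₁, hB₁, hB₁sum, hB₁eq⟩ := (hreg _ A').1 hFS''
  obtain ⟨B, hB, hBsum, hBeq⟩ := comp_flip hB₀ rfl hB₁ hB₁eq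
  exact ⟨B, hB, by rw [hBsum, hB₀sum, hB₁sum, add_zero, hsc], hBeq⟩

end Gen

section Prod
variable {G : Type*} [AddCommGroup G] [DecidableEq G]

local notation "H" => G × ℤ

lemma sum_nonneg_int {M : Multiset ℤ} (h : ∀ x ∈ M, 0 ≤ x) : 0 ≤ M.sum := by
  induction M using Multiset.induction with
  | empty => simp
  | cons a s ih =>
      rw [Multiset.sum_cons]
      have := h a (Multiset.mem_cons_self a s)
      have := ih (fun x hx => h x (Multiset.mem_cons_of_mem hx))
      omega

lemma FS_snd_nonneg {A : Multiset H} (h : ∀ x ∈ A, 0 ≤ x.2) {s : H} (hs : s ∈ FS A) :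
    0 ≤ s.2 := by
  obtain ⟨B, hB, rfl⟩ := mem_FS_iff.1 hs
  rw [Multiset.snd_sum]
  exact sum_nonneg_int (by
    intro x hx
    obtain ⟨y, hy, rfl⟩ := Multiset.mem_map.1 hx
    exact h y (Multiset.mem_of_le hB hy))

lemma exists_min_snd {A : Multiset H} (hA : A ≠ 0) : ∃ a ∈ A, ∀ b ∈ A, a.2 ≤ b.2 := by
  induction A using Multiset.induction with
  | empty => exact absurd rfl hA
  | cons a s ih =>
      by_cases hs : s = 0
      · subst hs
        exact ⟨a, Multiset.mem_cons_self a 0, by intro b hb; simp at hb; rw [hb]⟩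
      · obtain ⟨m, hm, hmin⟩ := ih hs
        by_cases hc : a.2 ≤ m.2
        · refine ⟨a, Multiset.mem_cons_self a s, ?_⟩
          intro b hb
          rcases Multiset.mem_cons.1 hb with rfl | hb
          · exact le_refl _
          · exact hc.trans (hmin b hb)
        · refine ⟨m, Multiset.mem_cons_of_mem hm, ?_⟩
          intro b hb
          rcases Multiset.mem_cons.1 hb with rfl | hb
          · omega
          · exact hmin b hb

lemma mem_of_minimal {P' : Multiset H} {a : H} (hP' : ∀ x ∈ P', 1 ≤ x.2)
    (ha : 1 ≤ a.2) (hmin : ∀ x ∈ P', a.2 ≤ x.2) (hFS : a ∈ FS P') : a ∈ P' := by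
  obtain ⟨B, hB, hsum⟩ := mem_FS_iff.1 hFS
  rcases Multiset.empty_or_exists_mem B with rfl | ⟨b, hb⟩
  · rw [Multiset.sum_zero] at hsum
    have : a.2 = 0 := by rw [← hsum]; rfl
    omega
  · obtain ⟨C, rfl⟩ := Multiset.exists_cons_of_mem hb
    rcases Multiset.empty_or_exists_mem C with rfl | ⟨c, hc⟩
    · simp only [Multiset.sum_cons, Multiset.sum_zero, add_zero] at hsum
      subst hsum
      exact Multiset.mem_of_le hB (Multiset.mem_cons_self _ _)
    · obtain ⟨D, rfl⟩ := Multiset.exists_cons_of_mem hc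
      exfalso
      have hbP : b ∈ P' := Multiset.mem_of_le hB (Multiset.mem_cons_self _ _)
      have hcP : c ∈ P' := Multiset.mem_of_le hB
        (Multiset.mem_cons_of_mem (Multiset.mem_cons_self _ _))
      have hD : ∀ x ∈ D, 1 ≤ x.2 := by
        intro x hx
        exact hP' x (Multiset.mem_of_le hB
          (Multiset.mem_cons_of_mem (Multiset.mem_cons_of_mem hx)))
      have h1 : a.2 = b.2 + c.2 + D.sum.2 := by
        rw [← hsum]; simp only [Multiset.sum_cons, Prod.snd_add]; ring
      have h2 : 0 ≤ D.sum.2 := by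
        rw [Multiset.snd_sum]
        exact sum_nonneg_int (by
          intro x hx
          obtain ⟨y, hy, rfl⟩ := Multiset.mem_map.1 hx
          exact le_trans (by omega) (hD y hy))
      have := hmin b hbP
      have := hmin c hcP
      omega

lemma FS_filter_zero_of_pos {P : Multiset H} (hP : ∀ x ∈ P, 1 ≤ x.2) :
    (FS P).filter (fun s => s.2 = 0) = {(0 : H)} := by
  induction P using Multiset.induction with
  | empty => rfl
  | cons a s ih =>
      have hs : ∀ x ∈ s, 1 ≤ x.2 := fun x hx => hP x (Multiset.mem_cons_of_mem hx)
      rw [FS_cons, Multiset.filter_add, ih hs, Multiset.filter_map]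
      have : (s.map Prod.snd).sum = (s.map Prod.snd).sum := rfl
      have hnil : ((FS s).filter ((fun t : H => t.2 = 0) ∘ (fun t => a + t))) = 0 := by
        rw [Multiset.filter_eq_nil]
        intro x hx
        have h1 : 0 ≤ x.2 := FS_snd_nonneg (fun y hy => le_trans (by omega) (hs y hy)) hx
        have h2 : 1 ≤ a.2 := hP a (Multiset.mem_cons_self a s)
        show ¬ (a + x).2 = 0
        simp only [Prod.snd_add]
        omega
      rw [hnil, Multiset.map_zero, add_zero]

lemma FS_filter_slice {Z P : Multiset H} (hZ : ∀ x ∈ Z, x.2 = 0) (hP : ∀ x ∈ P, 1 ≤ x.2) :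
    (FS (Z + P)).filter (fun s => s.2 = 0) = FS Z := by
  induction Z using Multiset.induction with
  | empty => rw [_root_.zero_add, FS_filter_zero_of_pos hP]; rfl
  | cons z Z₀ ih =>
      have hZ₀ : ∀ x ∈ Z₀, x.2 = 0 := fun x hx => hZ x (Multiset.mem_cons_of_mem hx)
      have hz : z.2 = 0 := hZ z (Multiset.mem_cons_self z Z₀)
      rw [Multiset.cons_add, FS_cons, Multiset.filter_add, ih hZ₀, Multiset.filter_map]
      have hcongr : ((FS (Z₀ + P)).filter ((fun t : H => t.2 = 0) ∘ (fun t => z + t)))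
          = (FS (Z₀ + P)).filter (fun s => s.2 = 0) := by
        apply Multiset.filter_congr
        intro x hx
        show (z + x).2 = 0 ↔ x.2 = 0
        simp only [Prod.snd_add]
        omega
      rw [hcongr, ih hZ₀, FS_cons]

end Prod

section Prod2
variable {G : Type*} [AddCommGroup G] [DecidableEq G]

local notation "H" => G × ℤ

lemma h2_prod (h2 : ∀ x : G, x + x = 0 → x = 0) : ∀ x : H, x + x = 0 → x = 0 := by
  rintro ⟨g, k⟩ hx
  have h1 : g + g = 0 := congrArg Prod.fst hx
  have hk : k + k = 0 := congrArg Prod.snd hx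
  have hg0 : g = 0 := h2 g h1
  have hk0 : k = 0 := by omega
  simp [Prod.ext_iff, hg0, hk0]

lemma card_eq_of_FS_eq {A A' : Multiset H} (h : FS A = FS A') : A.card = A'.card := by
  have := congrArg Multiset.card h
  rw [card_FS, card_FS] at this
  exact Nat.pow_right_injective (le_refl 2) this

/-- Multisets of positive second coordinate are determined by their subset sums. -/
lemma pos_unique (h2 : ∀ x : G, x + x = 0 → x = 0) :
    ∀ (n : ℕ) (P P' : Multiset H), P.card ≤ n → (∀ x ∈ P, 1 ≤ x.2) →
      (∀ x ∈ P', 1 ≤ x.2) → FS P = FS P' → P = P' := by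
  intro n
  induction n with
  | zero =>
      intro P P' hcard hP hP' hFS
      have h0 : P = 0 := Multiset.card_eq_zero.1 (by omega)
      subst h0
      have := card_eq_of_FS_eq hFS
      rw [Multiset.card_zero] at this
      exact (Multiset.card_eq_zero.1 this.symm).symm
  | succ n ih =>
      intro P P' hcard hP hP' hFS
      by_cases hP0 : P = 0
      · subst hP0
        have := card_eq_of_FS_eq hFS
        rw [Multiset.card_zero] at this
        exact (Multiset.card_eq_zero.1 this.symm).symm
      · have hP'0 : P' ≠ 0 := by
          intro hc
          subst hc
          have := card_eq_of_FS_eq hFS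
          rw [Multiset.card_zero] at this
          exact hP0 (Multiset.card_eq_zero.1 this)
        have hPP' : P + P' ≠ 0 := by
          intro hc
          have := congrArg Multiset.card hc
          simp only [Multiset.card_add, Multiset.card_zero] at this
          exact hP0 (Multiset.card_eq_zero.1 (by omega))
        obtain ⟨a, ha, hamin⟩ := exists_min_snd hPP'
        have key : a ∈ P ∧ a ∈ P' := by
          rcases Multiset.mem_add.1 ha with haP | haP'
          · refine ⟨haP, ?_⟩
            apply mem_of_minimal hP' (hP a haP)
              (fun x hx => hamin x (Multiset.mem_add.2 (Or.inr hx)))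
            rw [← hFS]
            exact mem_FS_of_mem haP
          · refine ⟨?_, haP'⟩
            apply mem_of_minimal hP (hP' a haP')
              (fun x hx => hamin x (Multiset.mem_add.2 (Or.inl hx)))
            rw [hFS]
            exact mem_FS_of_mem haP'
        obtain ⟨haP, haP'⟩ := key
        set Q := P.erase a with hQ
        set Q' := P'.erase a with hQ'
        have hPe : P = a ::ₘ Q := (Multiset.cons_erase haP).symm
        have hP'e : P' = a ::ₘ Q' := (Multiset.cons_erase haP').symm
        have hphi : phi Q = phi Q' := by
          have := FS_eq_iff_phi.1 hFS
          rw [hPe, hP'e, phi_cons, phi_cons] at this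
          have hc := phi_cancel (h2_prod h2) ({a} : Multiset H)
            (f := phi Q) (g := phi Q') (by
              rw [show phi ({a} : Multiset H) = 1 + AddMonoidAlgebra.single a 1 from by
                rw [show ({a} : Multiset H) = a ::ₘ 0 from rfl, phi_cons, phi_zero, mul_one]]
              exact this)
          exact hc
        have hQcard : Q.card ≤ n := by
          have hce := Multiset.card_erase_of_mem haP
          rw [← hQ, Nat.pred_eq_sub_one] at hce
          have hPc : P.card ≤ n + 1 := hcard
          omega
        have hQpos : ∀ x ∈ Q, 1 ≤ x.2 := fun x hx =>
          hP x (Multiset.mem_of_le (Multiset.erase_le a P) hx)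
        have hQ'pos : ∀ x ∈ Q', 1 ≤ x.2 := fun x hx =>
          hP' x (Multiset.mem_of_le (Multiset.erase_le a P') hx)
        have hQQ' : Q = Q' := ih Q Q' hQcard hQpos hQ'pos (FS_eq_iff_phi.2 hphi)
        rw [hPe, hP'e, hQQ']

lemma pair_fst_inj : Function.Injective (fun g : G => ((g, 0) : H)) := by
  intro a b hab
  simpa [Prod.ext_iff] using hab

lemma FS_map_pair (W : Multiset G) :
    FS (W.map (fun g : G => ((g, 0) : H))) = (FS W).map (fun g => ((g, 0) : H)) := by
  induction W using Multiset.induction with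
  | empty => rfl
  | cons w W ih =>
      rw [Multiset.map_cons, FS_cons, FS_cons, ih, Multiset.map_add]
      congr 1
      rw [Multiset.map_map, Multiset.map_map]
      apply Multiset.map_congr rfl
      intro x hx
      show (w, (0:ℤ)) + (x, (0:ℤ)) = (w + x, (0:ℤ))
      simp

lemma sum_map_pair (W : Multiset G) :
    (W.map (fun g : G => ((g, 0) : H))).sum = ((W.sum, 0) : H) := by
  induction W using Multiset.induction with
  | empty => rfl
  | cons w W ih => simp [ih]

end Prod2

section Main
variable {G : Type*} [AddCommGroup G] [DecidableEq G]

local notation "H" => G × ℤ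

lemma eq_map_fst {Z : Multiset H} (hZ : ∀ x ∈ Z, x.2 = 0) :
    Z = (Z.map Prod.fst).map (fun g => ((g, 0) : H)) := by
  rw [Multiset.map_map]
  have : Z.map ((fun g => ((g, 0) : H)) ∘ Prod.fst) = Z.map id :=
    Multiset.map_congr rfl (fun x hx => by
      show (x.1, (0:ℤ)) = x
      rw [Prod.ext_iff]
      exact ⟨rfl, (hZ x hx).symm⟩)
  rw [this, Multiset.map_id]

lemma single_inv (c : H) :
    AddMonoidAlgebra.single c (1:ℤ) * AddMonoidAlgebra.single (-c) 1 = 1 := by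
  rw [AddMonoidAlgebra.single_mul_single, one_mul, add_neg_cancel, ← AddMonoidAlgebra.one_def]

/-- The non-negative case of the main lemma. -/
lemma nonneg_case (h : FSRegular G) {A A' : Multiset H} {c : H}
    (hA : ∀ x ∈ A, 0 ≤ x.2) (hA' : ∀ x ∈ A', 0 ≤ x.2)
    (hFS : FS A' = (FS A).map (fun s => -c + s)) :
    ∃ B ≤ A, B.sum = c ∧ A' = (A - B) + B.map (fun x => -x) := by
  have h2 : ∀ x : G, x + x = 0 → x = 0 := fun g hg => no_two_torsion_of_FSRegular h g hg
  have h2' := h2_prod h2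
  -- c.2 = 0
  have hFSrev : FS A = (FS A').map (fun s => c + s) := by rw [hFS, translate_cancel]
  have c2 : c.2 = 0 := by
    have h0' : (0 : H) ∈ FS A' := zero_mem_FS _
    rw [hFS] at h0'
    obtain ⟨s, hs, hs0⟩ := Multiset.mem_map.1 h0'
    have hcs : c = s := neg_add_eq_zero.1 hs0
    have hs2 : 0 ≤ s.2 := FS_snd_nonneg hA hs
    have h0'' : (0 : H) ∈ FS A := zero_mem_FS _
    rw [hFSrev] at h0''
    obtain ⟨s', hs', hs0'⟩ := Multiset.mem_map.1 h0''
    have hs'2 : 0 ≤ s'.2 := FS_snd_nonneg hA' hs'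
    have : c.2 + s'.2 = 0 := by
      have := congrArg Prod.snd hs0'
      simpa using this
    have : 0 ≤ c.2 := hcs ▸ hs2
    omega
  -- split A and A'
  set Z := A.filter (fun x => x.2 = 0) with hZdef
  set P := A.filter (fun x => ¬ x.2 = 0) with hPdef
  have hZP : Z + P = A := Multiset.filter_add_not _ A
  have hZ : ∀ x ∈ Z, x.2 = 0 := by
    intro x hx
    rw [hZdef] at hx
    have h1 := Multiset.of_mem_filter hx
    simpa using h1
  have hPpos : ∀ x ∈ P, 1 ≤ x.2 := by
    intro x hx
    rw [hPdef] at hx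
    have h1 := Multiset.of_mem_filter hx
    have h2 := hA x (Multiset.mem_of_le (Multiset.filter_le _ A) hx)
    omega
  set Z' := A'.filter (fun x => x.2 = 0) with hZ'def
  set P' := A'.filter (fun x => ¬ x.2 = 0) with hP'def
  have hZP' : Z' + P' = A' := Multiset.filter_add_not _ A'
  have hZ' : ∀ x ∈ Z', x.2 = 0 := by
    intro x hx
    rw [hZ'def] at hx
    have h1 := Multiset.of_mem_filter hx
    simpa using h1
  have hP'pos : ∀ x ∈ P', 1 ≤ x.2 := by
    intro x hx
    rw [hP'def] at hx
    have h1 := Multiset.of_mem_filter hx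
    have h2 := hA' x (Multiset.mem_of_le (Multiset.filter_le _ A') hx)
    omega
  -- slices
  have hFSZ : FS Z = (FS A).filter (fun s => s.2 = 0) := by
    have := FS_filter_slice hZ hPpos
    rw [hZP] at this
    exact this.symm
  have hFSZ' : FS Z' = (FS A').filter (fun s => s.2 = 0) := by
    have := FS_filter_slice hZ' hP'pos
    rw [hZP'] at this
    exact this.symm
  have hZtrans : FS Z' = (FS Z).map (fun s => -c + s) := by
    rw [hFSZ', hFS, Multiset.filter_map]
    have hcongr : (FS A).filter ((fun s : H => s.2 = 0) ∘ (fun s => -c + s))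
        = (FS A).filter (fun s => s.2 = 0) := by
      apply Multiset.filter_congr
      intro x hx
      show (-c + x).2 = 0 ↔ x.2 = 0
      simp only [Prod.snd_add, Prod.snd_neg]
      omega
    rw [hcongr, ← hFSZ]
  -- transfer to G
  set W := Z.map Prod.fst with hWdef
  set W' := Z'.map Prod.fst with hW'def
  have hZW : Z = W.map (fun g => ((g, 0) : H)) := eq_map_fst hZ
  have hZ'W' : Z' = W'.map (fun g => ((g, 0) : H)) := eq_map_fst hZ'
  have hWtrans : FS W' = (FS W).map (fun s => -c.1 + s) := by
    apply Multiset.map_injective (pair_fst_inj (G := G))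
    rw [← FS_map_pair, ← hZ'W', hZtrans, hZW, FS_map_pair, Multiset.map_map, Multiset.map_map]
    apply Multiset.map_congr rfl
    intro x hx
    show -c + (x, (0:ℤ)) = (-c.1 + x, (0:ℤ))
    rw [Prod.ext_iff]
    constructor
    · simp
    · simp [c2]
  obtain ⟨B_G, hBG, hBGsum, hW'eq⟩ := gen_flip_of_translate h hWtrans
  set B_Z := B_G.map (fun g => ((g, 0) : H)) with hBZdef
  have hBZ_le_Z : B_Z ≤ Z := by
    rw [hZW]
    exact Multiset.map_le_map hBG
  have hBZsum : B_Z.sum = c := by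
    rw [hBZdef, sum_map_pair, hBGsum]
    rw [Prod.ext_iff]
    exact ⟨rfl, c2.symm⟩
  have hsubZ : Z - B_Z = (W - B_G).map (fun g => ((g, 0) : H)) := by
    have hW : W = (W - B_G) + B_G := (tsub_add_cancel_of_le hBG).symm
    have : Z = (W - B_G).map (fun g => ((g, 0) : H)) + B_Z := by
      rw [hZW]
      conv_lhs => rw [hW]
      rw [Multiset.map_add]
    rw [this, add_tsub_cancel_right]
  have hmapnegBZ : B_Z.map (fun x => -x) = (B_G.map (fun x => -x)).map (fun g => ((g, 0) : H)) := by
    rw [hBZdef, Multiset.map_map, Multiset.map_map]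
    apply Multiset.map_congr rfl
    intro x hx
    show -((x, (0:ℤ)) : H) = ((-x, (0:ℤ)) : H)
    simp
  have hZ'eq : Z' = (Z - B_Z) + B_Z.map (fun x => -x) := by
    rw [hZ'W', hW'eq, Multiset.map_add, ← hsubZ, ← hmapnegBZ]
  -- P = P'
  have hphiA : phi A' = AddMonoidAlgebra.single (-c) 1 * phi A := by
    rw [phi_eq_psi_FS, phi_eq_psi_FS, hFS, psi_translate]
  have hphiZ : phi Z' = AddMonoidAlgebra.single (-c) 1 * phi Z := by
    rw [phi_eq_psi_FS, phi_eq_psi_FS, hZtrans, psi_translate]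
  have hPP' : P = P' := by
    have e1 : phi Z' * phi P' = AddMonoidAlgebra.single (-c) 1 * (phi Z * phi P) := by
      rw [← phi_add, hZP', hphiA, ← phi_add, hZP]
    rw [hphiZ, mul_assoc] at e1
    have e2 : phi Z * phi P' = phi Z * phi P := by
      have := congrArg (fun t => AddMonoidAlgebra.single c (1:ℤ) * t) e1
      simp only [← mul_assoc, single_inv, one_mul] at this
      exact this
    have e3 := phi_cancel h2' Z e2
    exact (pos_unique h2 P.card P P' (le_refl _) hPpos hP'pos (FS_eq_iff_phi.2 e3.symm)).symm ▸ rfl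
  -- assemble
  refine ⟨B_Z, hBZ_le_Z.trans (Multiset.filter_le _ A), hBZsum, ?_⟩
  have hsubA : A - B_Z = (Z - B_Z) + P := by
    apply Multiset.ext.2
    intro x
    have h1 := Multiset.le_iff_count.1 hBZ_le_Z x
    have h2 := congrArg (Multiset.count x) hZP
    simp only [Multiset.count_sub, Multiset.count_add] at *
    omega
  rw [hsubA, ← hZP', hZ'eq, hPP']
  apply Multiset.ext.2
  intro x
  simp only [Multiset.count_add]
  omega

/-- Main lemma: translated FS-equality gives a flip with prescribed sum, over `G × ℤ`. -/
lemma main_flip (h : FSRegular G) {A A' : Multiset H} {c : H}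
    (hFS : FS A' = (FS A).map (fun s => -c + s)) :
    ∃ B ≤ A, B.sum = c ∧ A' = (A - B) + B.map (fun x => -x) := by
  set N := A.filter (fun x => x.2 < 0) with hNdef
  set N' := A'.filter (fun x => x.2 < 0) with hN'def
  have hN : N ≤ A := Multiset.filter_le _ A
  have hN' : N' ≤ A' := Multiset.filter_le _ A'
  set Abar := (A - N) + N.map (fun x => -x) with hAbardef
  set Abar' := (A' - N') + N'.map (fun x => -x) with hAbar'def
  have hsubN : A - N = A.filter (fun x => ¬ x.2 < 0) := by
    conv_lhs => rw [← Multiset.filter_add_not (fun x : H => x.2 < 0) A]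
    rw [add_tsub_cancel_left]
  have hsubN' : A' - N' = A'.filter (fun x => ¬ x.2 < 0) := by
    conv_lhs => rw [← Multiset.filter_add_not (fun x : H => x.2 < 0) A']
    rw [add_tsub_cancel_left]
  have hAbar_pos : ∀ x ∈ Abar, 0 ≤ x.2 := by
    intro x hx
    rcases Multiset.mem_add.1 hx with hx1 | hx2
    · rw [hsubN] at hx1
      have := Multiset.of_mem_filter hx1
      omega
    · obtain ⟨y, hy, rfl⟩ := Multiset.mem_map.1 hx2
      rw [hNdef] at hy
      have := Multiset.of_mem_filter hy
      simp only [Prod.snd_neg]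
      omega
  have hAbar'_pos : ∀ x ∈ Abar', 0 ≤ x.2 := by
    intro x hx
    rcases Multiset.mem_add.1 hx with hx1 | hx2
    · rw [hsubN'] at hx1
      have := Multiset.of_mem_filter hx1
      omega
    · obtain ⟨y, hy, rfl⟩ := Multiset.mem_map.1 hx2
      rw [hN'def] at hy
      have := Multiset.of_mem_filter hy
      simp only [Prod.snd_neg]
      omega
  have hflipA : FS Abar = (FS A).map (fun s => -N.sum + s) := FS_flip hN
  have hflipA' : FS Abar' = (FS A').map (fun s => -N'.sum + s) := FS_flip hN'
  have hFSArev : FS A = (FS Abar).map (fun s => N.sum + s) := by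
    rw [hflipA, translate_cancel]
  have hFS2 : FS Abar' = (FS Abar).map (fun s => -(c + N'.sum - N.sum) + s) := by
    rw [hflipA', hFS, hFSArev, Multiset.map_map, Multiset.map_map]
    apply Multiset.map_congr rfl
    intro x hx
    show -N'.sum + (-c + (N.sum + x)) = -(c + N'.sum - N.sum) + x
    abel
  obtain ⟨Bb, hBb, hBbsum, hBbeq⟩ := nonneg_case h hAbar_pos hAbar'_pos hFS2
  obtain ⟨B₁, hB₁, hB₁sum, hB₁eq⟩ := comp_flip hN rfl hBb hBbeq
  obtain ⟨hmn, heqA'⟩ := flip_invol hN' (rfl : Abar' = (A' - N') + N'.map (fun x => -x))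
  obtain ⟨B, hB, hBsum, hBeq⟩ := comp_flip hB₁ hB₁eq hmn heqA'
  refine ⟨B, hB, ?_, hBeq⟩
  rw [hBsum, hB₁sum, hBbsum, msum_neg]
  abel

end Main

/-- If `G` is `FS`-regular, then so is `G ⊕ ℤ`. -/
theorem FSRegular_prod_int {G : Type*} [AddCommGroup G] [DecidableEq G]
    (h : FSRegular G) : FSRegular (G × ℤ) := by
  intro A A'
  constructor
  · intro hFS
    have hFS' : FS A' = (FS A).map (fun s => -(0 : G × ℤ) + s) := by
      have hid : (FS A).map (fun s => -(0 : G × ℤ) + s) = FS A := by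
        have : (FS A).map (fun s => -(0 : G × ℤ) + s) = (FS A).map id :=
          Multiset.map_congr rfl (fun x _ => by simp)
        rw [this, Multiset.map_id]
      rw [hid, hFS]
    obtain ⟨B, hB, hBsum, hBeq⟩ := main_flip h hFS'
    exact ⟨B, hB, hBsum, hBeq⟩
  · rintro ⟨B, hB, hBsum, rfl⟩
    rw [FS_flip hB, hBsum]
    have : (FS A).map (fun s => -(0 : G × ℤ) + s) = (FS A).map id :=
      Multiset.map_congr rfl (fun x _ => by simp)
    rw [this, Multiset.map_id]
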